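/- arXiv:2508.19054 — 2 statements merged into one kernel-verified Lean document; each statement's English description precedes it below -/
import Mathlib

section
/- (Proposition 3, second part.) Under Condition 1, for every x ∈ ℝⁿ, every d ∈ ℕ, and every pair of infinite input sequences u = (u_0,u_1,…) in ℝᵐ and i = (i_0,i_1,…) in 𝕄 such that φ(k,x,u,i) → 0 as k → ∞, the inequality (V*_d(x) : [0,∞]) ≤ J(x,u,i) holds, where the infinite-horizon cost J is valued in the extended nonnegative reals. -/
open Matrix Filter
open scoped ENNReal

/-- Data of a switched linear-quadratic problem with `M` modes,
state dimension `n` and continuous-input dimension `m`. -/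
structure SwitchedLQR (n m M : ℕ) where
  A : Fin M → Matrix (Fin n) (Fin n) ℝ
  B : Fin M → Matrix (Fin n) (Fin m) ℝ
  Q : Fin M → Matrix (Fin n) (Fin n) ℝ
  R : Fin M → Matrix (Fin m) (Fin m) ℝ

namespace SwitchedLQR

variable {n m M : ℕ}

/-- Stage cost `ℓ(x,u,i) = xᵀQᵢx + uᵀRᵢu`. -/
def ell (S : SwitchedLQR n m M) (x : Fin n → ℝ) (u : Fin m → ℝ) (i : Fin M) : ℝ :=
  x ⬝ᵥ ((S.Q i) *ᵥ x) + u ⬝ᵥ ((S.R i) *ᵥ u)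

/-- Riccati operator `𝓡ᵢ(P)`. -/
noncomputable def Ric (S : SwitchedLQR n m M) (i : Fin M)
    (P : Matrix (Fin n) (Fin n) ℝ) : Matrix (Fin n) (Fin n) ℝ :=
  S.Q i + (S.A i)ᵀ * P * S.A i -
    (S.A i)ᵀ * P * S.B i * (S.R i + (S.B i)ᵀ * P * S.B i)⁻¹ * ((S.B i)ᵀ * P * S.A i)

/-- `P_𝐢 = 𝓡_{i₀}(𝓡_{i₁}(⋯𝓡_{i_{d-1}}(P̲)⋯))` for a finite mode sequence `𝐢`. -/
noncomputable def Pseq (S : SwitchedLQR n m M) (Pund : Matrix (Fin n) (Fin n) ℝ)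
    (l : List (Fin M)) : Matrix (Fin n) (Fin n) ℝ :=
  l.foldr S.Ric Pund

/-- Solution `φ(k,x,u,i)` of the switched linear system. -/
def phi (S : SwitchedLQR n m M) (x : Fin n → ℝ) (u : ℕ → Fin m → ℝ) (is : ℕ → Fin M) :
    ℕ → Fin n → ℝ
  | 0 => x
  | k + 1 => S.A (is k) *ᵥ (phi S x u is k) + S.B (is k) *ᵥ (u k)

/-- Finite-horizon cost `J_d` with terminal cost matrix `P̲`. -/
noncomputable def Jd (S : SwitchedLQR n m M) (Pund : Matrix (Fin n) (Fin n) ℝ) (d : ℕ)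
    (x : Fin n → ℝ) (u : ℕ → Fin m → ℝ) (is : ℕ → Fin M) : ℝ :=
  (∑ k ∈ Finset.range d, S.ell (S.phi x u is k) (u k) (is k)) +
    (S.phi x u is d) ⬝ᵥ (Pund *ᵥ (S.phi x u is d))

/-- Infinite-horizon cost `J(x,u,i) ∈ [0,∞]`. -/
noncomputable def Jinf (S : SwitchedLQR n m M) (x : Fin n → ℝ) (u : ℕ → Fin m → ℝ)
    (is : ℕ → Fin M) : ℝ≥0∞ :=
  ∑' k : ℕ, ENNReal.ofReal (S.ell (S.phi x u is k) (u k) (is k))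

/-- Optimal value function `V*(x)`. -/
noncomputable def Vstar (S : SwitchedLQR n m M) (x : Fin n → ℝ) : ℝ≥0∞ :=
  ⨅ (u : ℕ → Fin m → ℝ) (is : ℕ → Fin M), S.Jinf x u is

/-- `V*_d(x)`: minimum over length-`d` mode sequences `𝐢` of `xᵀP_𝐢x`. -/
noncomputable def Vd (S : SwitchedLQR n m M) (Pund : Matrix (Fin n) (Fin n) ℝ) (d : ℕ)
    (x : Fin n → ℝ) : ℝ :=
  sInf {r : ℝ | ∃ l : List (Fin M), l.length = d ∧ r = x ⬝ᵥ ((S.Pseq Pund l) *ᵥ x)}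

/-- Condition 1: the LMI block matrix is positive semi-definite for every mode. -/
def Cond1 (S : SwitchedLQR n m M) (Pund : Matrix (Fin n) (Fin n) ℝ) : Prop :=
  ∀ i : Fin M,
    (Matrix.fromBlocks
      ((S.A i)ᵀ * Pund * S.A i - Pund + S.Q i) ((S.A i)ᵀ * Pund * S.B i)
      ((S.B i)ᵀ * Pund * S.A i) (S.R i + (S.B i)ᵀ * Pund * S.B i)).PosSemidef

/-- Assumption SA1. -/
def SA1 (S : SwitchedLQR n m M) (Pbar : Matrix (Fin n) (Fin n) ℝ) : Prop :=
  Pbar.PosDef ∧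
    ∀ x : Fin n → ℝ, ∃ (u : ℕ → Fin m → ℝ) (is : ℕ → Fin M),
      S.Jinf x u is = S.Vstar x ∧ S.Vstar x ≤ ENNReal.ofReal (x ⬝ᵥ (Pbar *ᵥ x))

/-- `H*_d(x)`. -/
noncomputable def HStar (S : SwitchedLQR n m M) (Pund : Matrix (Fin n) (Fin n) ℝ) (d : ℕ)
    (x : Fin n → ℝ) : Set ((Fin m → ℝ) × Fin M) :=
  {p | S.Vd Pund d x =
        S.ell x p.1 p.2 + S.Vd Pund (d - 1) (S.A p.2 *ᵥ x + S.B p.2 *ᵥ p.1)}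

/-- `F_d(x)`. -/
noncomputable def Fd (S : SwitchedLQR n m M) (Pund : Matrix (Fin n) (Fin n) ℝ) (d : ℕ)
    (x : Fin n → ℝ) : Set (Fin n → ℝ) :=
  {y | ∃ p ∈ S.HStar Pund d x, y = S.A p.2 *ᵥ x + S.B p.2 *ᵥ p.1}

end SwitchedLQR


section Aux
lemma dtm {a b : Type*} [Fintype a] [Fintype b] (M : Matrix a b ℝ) (v : b → ℝ) (z : a → ℝ) :
    v ⬝ᵥ (Mᵀ *ᵥ z) = (M *ᵥ v) ⬝ᵥ z := by
  rw [Matrix.dotProduct_mulVec, Matrix.vecMul_transpose]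

lemma dtm' {a b : Type*} [Fintype a] [Fintype b] (M : Matrix a b ℝ) (v : a → ℝ) (z : b → ℝ) :
    v ⬝ᵥ (M *ᵥ z) = (Mᵀ *ᵥ v) ⬝ᵥ z := by
  conv_lhs => rw [← Matrix.transpose_transpose M]
  rw [dtm]

lemma psd_quad_nonneg {k : Type*} [Fintype k] {P : Matrix k k ℝ} (hP : P.PosSemidef)
    (v : k → ℝ) : 0 ≤ v ⬝ᵥ (P *ᵥ v) := by simpa using hP.dotProduct_mulVec_nonneg v

lemma real_transpose_eq {k : Type*} [Fintype k] {P : Matrix k k ℝ} (hP : P.IsHermitian) :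
    Pᵀ = P := by simpa using hP.eq

lemma quad_key {n m : ℕ} (A : Matrix (Fin n) (Fin n) ℝ) (B : Matrix (Fin n) (Fin m) ℝ)
    (Q : Matrix (Fin n) (Fin n) ℝ) (R : Matrix (Fin m) (Fin m) ℝ)
    {P : Matrix (Fin n) (Fin n) ℝ} (hP : Pᵀ = P) {G : Matrix (Fin m) (Fin m) ℝ}
    (hG : G = R + Bᵀ * P * B) (hGsym : G⁻¹ᵀ = G⁻¹) (hGi : G * G⁻¹ = 1)
    (hGi' : G⁻¹ * G = 1) (x : Fin n → ℝ) (u : Fin m → ℝ) :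
    x ⬝ᵥ ((Q + Aᵀ*P*A - Aᵀ*P*B*G⁻¹*(Bᵀ*P*A)) *ᵥ x)
      + (u + G⁻¹ *ᵥ ((Bᵀ*P*A) *ᵥ x)) ⬝ᵥ (G *ᵥ (u + G⁻¹ *ᵥ ((Bᵀ*P*A) *ᵥ x)))
    = x ⬝ᵥ (Q *ᵥ x) + u ⬝ᵥ (R *ᵥ u)
      + (A *ᵥ x + B *ᵥ u) ⬝ᵥ (P *ᵥ (A *ᵥ x + B *ᵥ u)) := by
  have hPm : ∀ (v z : Fin n → ℝ), v ⬝ᵥ (P *ᵥ z) = (P *ᵥ v) ⬝ᵥ z := fun v z => by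
    conv_lhs => rw [← hP]
    rw [dtm]
  have hGm : ∀ (v z : Fin m → ℝ), v ⬝ᵥ (G⁻¹ *ᵥ z) = (G⁻¹ *ᵥ v) ⬝ᵥ z := fun v z => by
    conv_lhs => rw [← hGsym]
    rw [dtm]
  set a := A *ᵥ x with ha
  set b := B *ᵥ u with hb
  have hs : (Bᵀ*P*A) *ᵥ x = Bᵀ *ᵥ (P *ᵥ a) := by simp only [← Matrix.mulVec_mulVec, ha]
  set s := Bᵀ *ᵥ (P *ᵥ a) with hsdef
  rw [hs]
  set t := G⁻¹ *ᵥ s with ht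
  have e0 : (Q + Aᵀ*P*A - Aᵀ*P*B*G⁻¹*(Bᵀ*P*A)) *ᵥ x
      = Q *ᵥ x + Aᵀ *ᵥ (P *ᵥ a) - Aᵀ *ᵥ (P *ᵥ (B *ᵥ t)) := by
    simp [Matrix.add_mulVec, Matrix.sub_mulVec, ← Matrix.mulVec_mulVec, ht, hsdef, ha]
  have e1 : x ⬝ᵥ (Aᵀ *ᵥ (P *ᵥ a)) = a ⬝ᵥ (P *ᵥ a) := by rw [dtm]
  have e2 : x ⬝ᵥ (Aᵀ *ᵥ (P *ᵥ (B *ᵥ t))) = s ⬝ᵥ t := by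
    rw [dtm, hPm, dtm' B, ← hsdef]
  have e3 : G *ᵥ t = s := by rw [ht, Matrix.mulVec_mulVec, hGi, Matrix.one_mulVec]
  have e4 : t ⬝ᵥ (G *ᵥ u) = u ⬝ᵥ s := by
    rw [ht, ← hGm, Matrix.mulVec_mulVec, hGi', Matrix.one_mulVec, dotProduct_comm]
  have e5 : u ⬝ᵥ (G *ᵥ u) = u ⬝ᵥ (R *ᵥ u) + b ⬝ᵥ (P *ᵥ b) := by
    rw [hG, Matrix.add_mulVec, dotProduct_add]
    congr 1
    rw [show (Bᵀ*P*B) *ᵥ u = Bᵀ *ᵥ (P *ᵥ b) from by simp only [← Matrix.mulVec_mulVec, hb], dtm, ← hb]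
  have e6 : b ⬝ᵥ (P *ᵥ a) = u ⬝ᵥ s := (dtm B u (P *ᵥ a)).symm
  have e7 : a ⬝ᵥ (P *ᵥ b) = u ⬝ᵥ s := by rw [hPm, dotProduct_comm, e6]
  have e8 : t ⬝ᵥ s = s ⬝ᵥ t := dotProduct_comm _ _
  rw [e0]
  simp only [dotProduct_add, add_dotProduct, dotProduct_sub,
    Matrix.mulVec_add, e1, e2, e3, e4, e5, e6, e7, e8]
  ring
end Aux

namespace SwitchedLQR
variable {n m M : ℕ}

-- ######## new lemmas

lemma ell_nonneg (S : SwitchedLQR n m M) (hQ : ∀ i, (S.Q i).PosDef)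
    (hR : ∀ i, (S.R i).PosDef) (x : Fin n → ℝ) (u : Fin m → ℝ) (i : Fin M) :
    0 ≤ S.ell x u i :=
  add_nonneg (psd_quad_nonneg (hQ i).posSemidef x) (psd_quad_nonneg (hR i).posSemidef u)

lemma real_conjT {a b : Type*} (Mt : Matrix a b ℝ) : Mtᴴ = Mtᵀ := by
  ext i j; simp [Matrix.conjTranspose_apply]

lemma ric_step (S : SwitchedLQR n m M) (i : Fin M) {P : Matrix (Fin n) (Fin n) ℝ}
    (hP : P.PosSemidef) (hQi : (S.Q i).PosDef) (hRi : (S.R i).PosDef) :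
    (S.Ric i P).PosSemidef ∧
    ∀ (x : Fin n → ℝ) (u : Fin m → ℝ), x ⬝ᵥ (S.Ric i P *ᵥ x) ≤ S.ell x u i +
      (S.A i *ᵥ x + S.B i *ᵥ u) ⬝ᵥ (P *ᵥ (S.A i *ᵥ x + S.B i *ᵥ u)) := by
  set A := S.A i
  set B := S.B i
  set Q := S.Q i
  set R := S.R i
  have hBPB : (Bᵀ * P * B).PosSemidef := by
    have h := hP.conjTranspose_mul_mul_same B
    rwa [real_conjT] at h
  have hGpd : (R + Bᵀ * P * B).PosDef := hRi.add_posSemidef hBPB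
  set G := R + Bᵀ * P * B with hGdef
  have hGsym' : Gᵀ = G := real_transpose_eq hGpd.1
  have hdet : IsUnit G.det := isUnit_iff_ne_zero.mpr hGpd.det_pos.ne'
  have hGi : G * G⁻¹ = 1 := Matrix.mul_nonsing_inv _ hdet
  have hGi' : G⁻¹ * G = 1 := Matrix.nonsing_inv_mul _ hdet
  have hGinvsym : G⁻¹ᵀ = G⁻¹ := by rw [Matrix.transpose_nonsing_inv, hGsym']
  have hP' : Pᵀ = P := real_transpose_eq hP.1
  have hRic : S.Ric i P = Q + Aᵀ*P*A - Aᵀ*P*B*G⁻¹*(Bᵀ*P*A) := rfl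
  have key := quad_key A B Q R hP' hGdef hGinvsym hGi hGi'
  have hle : ∀ (x : Fin n → ℝ) (u : Fin m → ℝ), x ⬝ᵥ (S.Ric i P *ᵥ x) ≤ S.ell x u i +
      (A *ᵥ x + B *ᵥ u) ⬝ᵥ (P *ᵥ (A *ᵥ x + B *ᵥ u)) := by
    intro x u
    have h0 := psd_quad_nonneg hGpd.posSemidef (u + G⁻¹ *ᵥ ((Bᵀ*P*A) *ᵥ x))
    have hk := key x u
    rw [hRic]
    show _ ≤ x ⬝ᵥ (Q *ᵥ x) + u ⬝ᵥ (R *ᵥ u) + _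
    linarith
  refine ⟨Matrix.PosSemidef.of_dotProduct_mulVec_nonneg ?_ ?_, hle⟩
  · show (S.Ric i P)ᴴ = S.Ric i P
    rw [real_conjT, hRic]
    simp only [Matrix.transpose_add, Matrix.transpose_sub, Matrix.transpose_mul,
      Matrix.transpose_transpose, hP', hGinvsym, real_transpose_eq hQi.1, real_transpose_eq hRi.1, Matrix.mul_assoc]
  · intro x
    have hq := (key x (-(G⁻¹ *ᵥ ((Bᵀ*P*A) *ᵥ x)))).symm
    rw [neg_add_cancel] at hq
    simp only [Matrix.mulVec_zero, dotProduct_zero, zero_dotProduct, add_zero] at hq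
    have h1 := psd_quad_nonneg hQi.posSemidef x
    have h2 := psd_quad_nonneg hRi.posSemidef (-(G⁻¹ *ᵥ ((Bᵀ*P*A) *ᵥ x)))
    have h3 := psd_quad_nonneg hP (A *ᵥ x + B *ᵥ (-(G⁻¹ *ᵥ ((Bᵀ*P*A) *ᵥ x))))
    have : (0:ℝ) ≤ x ⬝ᵥ ((Q + Aᵀ*P*A - Aᵀ*P*B*G⁻¹*(Bᵀ*P*A)) *ᵥ x) := by linarith
    simpa [hRic] using this

lemma pseq_psd (S : SwitchedLQR n m M) (hQ : ∀ i, (S.Q i).PosDef)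
    (hR : ∀ i, (S.R i).PosDef) {Pund : Matrix (Fin n) (Fin n) ℝ} (hPund : Pund.PosSemidef) :
    ∀ l : List (Fin M), (S.Pseq Pund l).PosSemidef := by
  intro l
  induction l with
  | nil => exact hPund
  | cons i l ih => exact (S.ric_step i ih (hQ i) (hR i)).1

lemma phi_succ_shift (S : SwitchedLQR n m M) (x : Fin n → ℝ) (u : ℕ → Fin m → ℝ)
    (is : ℕ → Fin M) : ∀ k, S.phi x u is (k+1) =
      S.phi (S.A (is 0) *ᵥ x + S.B (is 0) *ᵥ u 0) (fun j => u (j+1)) (fun j => is (j+1)) k := by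
  intro k
  induction k with
  | zero => rfl
  | succ k ih => rw [show S.phi x u is (k+1+1) = S.A (is (k+1)) *ᵥ (S.phi x u is (k+1))
      + S.B (is (k+1)) *ᵥ (u (k+1)) from rfl, ih]; rfl

lemma jd_succ (S : SwitchedLQR n m M) (Pund : Matrix (Fin n) (Fin n) ℝ) (d : ℕ)
    (x : Fin n → ℝ) (u : ℕ → Fin m → ℝ) (is : ℕ → Fin M) :
    S.Jd Pund (d+1) x u is = S.ell x (u 0) (is 0) +
      S.Jd Pund d (S.A (is 0) *ᵥ x + S.B (is 0) *ᵥ u 0) (fun j => u (j+1)) (fun j => is (j+1)) := by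
  unfold SwitchedLQR.Jd
  rw [Finset.sum_range_succ']
  simp only [phi_succ_shift]
  have h0 : S.phi x u is 0 = x := rfl
  rw [h0]
  ring

lemma vd_le_jd (S : SwitchedLQR n m M) (hQ : ∀ i, (S.Q i).PosDef)
    (hR : ∀ i, (S.R i).PosDef) {Pund : Matrix (Fin n) (Fin n) ℝ} (hPund : Pund.PosSemidef) :
    ∀ (d : ℕ) (x : Fin n → ℝ) (u : ℕ → Fin m → ℝ) (is : ℕ → Fin M),
      x ⬝ᵥ (S.Pseq Pund ((List.range d).map is) *ᵥ x) ≤ S.Jd Pund d x u is := by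
  intro d
  induction d with
  | zero => intro x u is; simp [SwitchedLQR.Pseq, SwitchedLQR.Jd]; rfl
  | succ d ih =>
    intro x u is
    have hlist : (List.range (d+1)).map is = is 0 :: (List.range d).map (fun j => is (j+1)) := by
      rw [List.range_succ_eq_map, List.map_cons, List.map_map]
      rfl
    rw [hlist]
    have hPl : (S.Pseq Pund ((List.range d).map fun j => is (j+1))).PosSemidef :=
      S.pseq_psd hQ hR hPund _
    have hcons : S.Pseq Pund (is 0 :: (List.range d).map (fun j => is (j+1)))
        = S.Ric (is 0) (S.Pseq Pund ((List.range d).map fun j => is (j+1))) := rfl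
    rw [hcons]
    have step := (S.ric_step (is 0) hPl (hQ (is 0)) (hR (is 0))).2 x (u 0)
    refine le_trans step ?_
    rw [jd_succ]
    have := ih (S.A (is 0) *ᵥ x + S.B (is 0) *ᵥ u 0) (fun j => u (j+1)) (fun j => is (j+1))
    linarith

lemma cond1_ineq (S : SwitchedLQR n m M) {Pund : Matrix (Fin n) (Fin n) ℝ}
    (hC : S.Cond1 Pund) (i : Fin M) (x : Fin n → ℝ) (u : Fin m → ℝ) :
    x ⬝ᵥ (Pund *ᵥ x) ≤ S.ell x u i +
      (S.A i *ᵥ x + S.B i *ᵥ u) ⬝ᵥ (Pund *ᵥ (S.A i *ᵥ x + S.B i *ᵥ u)) := by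
  have h := (hC i).dotProduct_mulVec_nonneg (Sum.elim x u)
  have hstar : star (Sum.elim x u) = Sum.elim x u := by
    funext j; cases j <;> simp
  rw [hstar, Matrix.fromBlocks_mulVec, sumElim_dotProduct_sumElim] at h
  simp only [Matrix.add_mulVec, Matrix.sub_mulVec, ← Matrix.mulVec_mulVec,
    dotProduct_add, dotProduct_sub, dtm, Sum.elim_comp_inl, Sum.elim_comp_inr] at h
  show _ ≤ x ⬝ᵥ (S.Q i *ᵥ x) + u ⬝ᵥ (S.R i *ᵥ u) + _
  simp only [Matrix.mulVec_add, dotProduct_add, add_dotProduct]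
  linarith

lemma step_ineq (S : SwitchedLQR n m M) {Pund : Matrix (Fin n) (Fin n) ℝ}
    (hC : S.Cond1 Pund) (x : Fin n → ℝ) (u : ℕ → Fin m → ℝ) (is : ℕ → Fin M) (k : ℕ) :
    (S.phi x u is k) ⬝ᵥ (Pund *ᵥ (S.phi x u is k)) ≤
      S.ell (S.phi x u is k) (u k) (is k) +
      (S.phi x u is (k+1)) ⬝ᵥ (Pund *ᵥ (S.phi x u is (k+1))) :=
  S.cond1_ineq hC (is k) (S.phi x u is k) (u k)

lemma telescope_ineq (S : SwitchedLQR n m M) {Pund : Matrix (Fin n) (Fin n) ℝ}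
    (hC : S.Cond1 Pund) (x : Fin n → ℝ) (u : ℕ → Fin m → ℝ) (is : ℕ → Fin M) (d : ℕ) :
    ∀ j : ℕ, (S.phi x u is d) ⬝ᵥ (Pund *ᵥ (S.phi x u is d)) ≤
      (∑ k ∈ Finset.Ico d (d+j), S.ell (S.phi x u is k) (u k) (is k)) +
      (S.phi x u is (d+j)) ⬝ᵥ (Pund *ᵥ (S.phi x u is (d+j))) := by
  intro j
  induction j with
  | zero => simp
  | succ j ih =>
    have h2 := S.step_ineq hC x u is (d+j)
    rw [show d+(j+1) = (d+j)+1 from rfl, Finset.sum_Ico_succ_top (Nat.le_add_right d j)]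
    linarith

end SwitchedLQR

/-- Proposition 3, second part: under Condition 1, for every `x`,
`d`, and infinite input sequences `(u,i)` whose solution converges to `0`,
`V*_d(x) ≤ J(x,u,i)` in `[0,∞]`. -/
theorem stmt8 {n m M : ℕ} (hn : 0 < n) (hm : 0 < m) (hM : 0 < M)
    (S : SwitchedLQR n m M)
    (hQ : ∀ i : Fin M, (S.Q i).PosDef) (hR : ∀ i : Fin M, (S.R i).PosDef)
    (Pund : Matrix (Fin n) (Fin n) ℝ) (hPund : Pund.PosSemidef)
    (hC : S.Cond1 Pund) :
    ∀ (x : Fin n → ℝ) (d : ℕ) (u : ℕ → Fin m → ℝ) (is : ℕ → Fin M),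
      Tendsto (fun k => S.phi x u is k) atTop (nhds 0) →
      ENNReal.ofReal (S.Vd Pund d x) ≤ S.Jinf x u is := by
  intro x d u is hphi
  by_cases htop : S.Jinf x u is = ⊤
  · rw [htop]; exact le_top
  set g : ℕ → ℝ := fun k => S.ell (S.phi x u is k) (u k) (is k) with hgdef
  have hg0 : ∀ k, 0 ≤ g k := fun k => S.ell_nonneg hQ hR _ _ _
  set F : ℕ → NNReal := fun k => ⟨g k, hg0 k⟩ with hF
  have hJ' : S.Jinf x u is = ∑' k, (F k : ℝ≥0∞) :=
    tsum_congr (fun k => ENNReal.ofReal_eq_coe_nnreal _)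
  have hsumF : Summable F := by
    refine ENNReal.tsum_coe_ne_top_iff_summable.mp ?_
    rw [← hJ']; exact htop
  have hsum : Summable g := NNReal.summable_coe.mpr hsumF
  set qP : (Fin n → ℝ) → ℝ := fun v => v ⬝ᵥ (Pund *ᵥ v) with hqP
  have hcont : Continuous qP := by
    simp only [hqP, dotProduct, Matrix.mulVec]
    fun_prop
  have htendq : Tendsto (fun N => qP (S.phi x u is N)) atTop (nhds 0) := by
    have h0 : qP 0 = 0 := by simp [hqP]
    have := (hcont.tendsto 0).comp hphi
    rwa [h0] at this
  have hpart : Tendsto (fun N => ∑ k ∈ Finset.range N, g k) atTop (nhds (∑' k, g k)) :=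
    hsum.hasSum.tendsto_sum_nat
  have hIco : Tendsto (fun N => ∑ k ∈ Finset.Ico d N, g k) atTop
      (nhds ((∑' k, g k) - ∑ k ∈ Finset.range d, g k)) := by
    refine Tendsto.congr' ?_ (hpart.sub tendsto_const_nhds)
    filter_upwards [eventually_ge_atTop d] with N hN
    rw [Finset.sum_Ico_eq_sub _ hN]
  have hlim := hIco.add htendq
  have hkey : qP (S.phi x u is d) ≤ (∑' k, g k) - (∑ k ∈ Finset.range d, g k) + 0 := by
    refine ge_of_tendsto hlim ?_
    filter_upwards [eventually_ge_atTop d] with N hN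
    have ht := S.telescope_ineq hC x u is d (N - d)
    rw [Nat.add_sub_cancel' hN] at ht
    exact ht
  have hvd : S.Vd Pund d x ≤ S.Jd Pund d x u is := by
    have hbdd : BddBelow {r : ℝ | ∃ l : List (Fin M), l.length = d ∧
        r = x ⬝ᵥ ((S.Pseq Pund l) *ᵥ x)} := by
      refine ⟨0, fun r hr => ?_⟩
      obtain ⟨l, -, rfl⟩ := hr
      exact psd_quad_nonneg (S.pseq_psd hQ hR hPund l) x
    have hmem : x ⬝ᵥ (S.Pseq Pund ((List.range d).map is) *ᵥ x) ∈
        {r : ℝ | ∃ l : List (Fin M), l.length = d ∧ r = x ⬝ᵥ ((S.Pseq Pund l) *ᵥ x)} :=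
      ⟨(List.range d).map is, by simp, rfl⟩
    exact le_trans (csInf_le hbdd hmem) (S.vd_le_jd hQ hR hPund d x u is)
  have hJd : S.Jd Pund d x u is = (∑ k ∈ Finset.range d, g k) + qP (S.phi x u is d) := rfl
  have hfinal : S.Vd Pund d x ≤ ∑' k, g k := by
    rw [hJd] at hvd; linarith
  calc ENNReal.ofReal (S.Vd Pund d x) ≤ ENNReal.ofReal (∑' k, g k) :=
        ENNReal.ofReal_le_ofReal hfinal
    _ = ∑' k, ENNReal.ofReal (g k) := ENNReal.ofReal_tsum_of_nonneg hg0 hsum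
    _ = S.Jinf x u is := rfl
end

section
/- (Lemma 1.) Under Condition 1 and Assumption SA1, for every d ∈ ℕ and every x ∈ ℝⁿ: (V*_d(x) : [0,∞]) ≤ V*(x) ≤ xᵀP̄x. Moreover, for any infinite input sequences (u,i) with J(x,u,i) = V*(x), the solution satisfies φ(k,x,u,i) → 0 as k → ∞. -/
open Matrix Filter
open scoped ENNReal

section Helpers

variable {a b : ℕ}

lemma dotTrans (A : Matrix (Fin a) (Fin b) ℝ) (x : Fin b → ℝ) (y : Fin a → ℝ) :
    (A *ᵥ x) ⬝ᵥ y = x ⬝ᵥ (Aᵀ *ᵥ y) := by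
  rw [dotProduct_comm, Matrix.dotProduct_mulVec, ← Matrix.mulVec_transpose,
    dotProduct_comm]

lemma quadContinuous (Q : Matrix (Fin a) (Fin a) ℝ) :
    Continuous fun x : Fin a → ℝ => x ⬝ᵥ (Q *ᵥ x) := by
  simp only [dotProduct, mulVec]
  exact continuous_finset_sum _ fun i _ =>
    (continuous_apply i).mul (continuous_finset_sum _ fun j _ =>
      continuous_const.mul (continuous_apply j))

lemma dotSelfContinuous : Continuous fun x : Fin a → ℝ => x ⬝ᵥ x := by
  simp only [dotProduct]
  exact continuous_finset_sum _ fun i _ =>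
    (continuous_apply i).mul (continuous_apply i)

lemma dotSelf_nonneg (x : Fin a → ℝ) : 0 ≤ x ⬝ᵥ x :=
  Finset.sum_nonneg fun i _ => mul_self_nonneg _

lemma posdef_lower (ha : 0 < a) (Q : Matrix (Fin a) (Fin a) ℝ) (hQ : Q.PosDef) :
    ∃ c > 0, ∀ x : Fin a → ℝ, c * (x ⬝ᵥ x) ≤ x ⬝ᵥ (Q *ᵥ x) := by
  set Sph : Set (Fin a → ℝ) := {y | y ⬝ᵥ y = 1} with hS
  have hclosed : IsClosed Sph := isClosed_eq dotSelfContinuous continuous_const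
  have hbdd : Bornology.IsBounded Sph := by
    refine (Metric.isBounded_closedBall (x := (0 : Fin a → ℝ)) (r := 1)).subset ?_
    intro y hy
    rw [Metric.mem_closedBall, dist_zero_right]
    rw [pi_norm_le_iff_of_nonneg (by norm_num)]
    intro i
    rw [Real.norm_eq_abs, abs_le_one_iff_mul_self_le_one]
    calc y i * y i ≤ ∑ j, y j * y j :=
          Finset.single_le_sum (fun j _ => mul_self_nonneg (y j)) (Finset.mem_univ i)
      _ = 1 := hy
  have hcpt : IsCompact Sph := Metric.isCompact_of_isClosed_isBounded hclosed hbdd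
  have hne : Sph.Nonempty := by
    refine ⟨Pi.single ⟨0, ha⟩ 1, ?_⟩
    simp [hS, dotProduct, Pi.single_apply]
  obtain ⟨y₀, hy₀, hmin⟩ := hcpt.exists_isMinOn hne (quadContinuous Q).continuousOn
  have hy₀ne : y₀ ≠ 0 := by
    intro h
    rw [hS] at hy₀
    simp [h] at hy₀
  refine ⟨y₀ ⬝ᵥ (Q *ᵥ y₀), by simpa using hQ.dotProduct_mulVec_pos hy₀ne, fun x => ?_⟩
  rcases eq_or_ne x 0 with rfl | hx
  · simp
  · have hxx : 0 < x ⬝ᵥ x :=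
      lt_of_le_of_ne (dotSelf_nonneg x) (fun h => hx (dotProduct_self_eq_zero.mp h.symm))
    set t : ℝ := Real.sqrt (x ⬝ᵥ x) with ht
    have htpos : 0 < t := Real.sqrt_pos.mpr hxx
    have htsq : t * t = x ⬝ᵥ x := Real.mul_self_sqrt hxx.le
    have hmem : (t⁻¹ • x) ∈ Sph := by
      rw [hS]
      simp only [Set.mem_setOf_eq, smul_dotProduct, dotProduct_smul, smul_eq_mul]
      field_simp
      linarith [htsq]
    have := hmin hmem
    simp only [Set.mem_setOf_eq] at this
    have hexp : (t⁻¹ • x) ⬝ᵥ (Q *ᵥ (t⁻¹ • x)) = t⁻¹ * t⁻¹ * (x ⬝ᵥ (Q *ᵥ x)) := by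
      rw [smul_dotProduct, Matrix.mulVec_smul, dotProduct_smul]
      simp [smul_eq_mul]; ring
    rw [hexp] at this
    have h2 : (y₀ ⬝ᵥ (Q *ᵥ y₀)) * (x ⬝ᵥ x) ≤ t⁻¹ * t⁻¹ * (x ⬝ᵥ (Q *ᵥ x)) * (x ⬝ᵥ x) := by
      nlinarith [hxx]
    calc (y₀ ⬝ᵥ (Q *ᵥ y₀)) * (x ⬝ᵥ x) ≤ t⁻¹ * t⁻¹ * (x ⬝ᵥ (Q *ᵥ x)) * (x ⬝ᵥ x) := h2
      _ = x ⬝ᵥ (Q *ᵥ x) := by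
          rw [← htsq]
          field_simp

end Helpers

section Ric

variable {n m M : ℕ}

lemma ell_nonneg (S : SwitchedLQR n m M) (hQ : ∀ i, (S.Q i).PosDef)
    (hR : ∀ i, (S.R i).PosDef) (x : Fin n → ℝ) (u : Fin m → ℝ) (i : Fin M) :
    0 ≤ S.ell x u i :=
  add_nonneg (by simpa using (hQ i).posSemidef.dotProduct_mulVec_nonneg x) (by simpa using (hR i).posSemidef.dotProduct_mulVec_nonneg u)

lemma ric_identity (S : SwitchedLQR n m M) (i : Fin M)
    (P : Matrix (Fin n) (Fin n) ℝ) (hP : Pᵀ = P) (hRs : (S.R i)ᵀ = S.R i)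
    (hWu : IsUnit (S.R i + (S.B i)ᵀ * P * S.B i).det) (x : Fin n → ℝ) (u : Fin m → ℝ) :
    S.ell x u i + (S.A i *ᵥ x + S.B i *ᵥ u) ⬝ᵥ (P *ᵥ (S.A i *ᵥ x + S.B i *ᵥ u)) =
      x ⬝ᵥ (S.Ric i P *ᵥ x) +
      (u + ((S.R i + (S.B i)ᵀ * P * S.B i)⁻¹ * ((S.B i)ᵀ * P * S.A i)) *ᵥ x) ⬝ᵥ
        ((S.R i + (S.B i)ᵀ * P * S.B i) *ᵥ
          (u + ((S.R i + (S.B i)ᵀ * P * S.B i)⁻¹ * ((S.B i)ᵀ * P * S.A i)) *ᵥ x)) := by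
  set A := S.A i
  set B := S.B i
  set R := S.R i
  set Q := S.Q i
  set W : Matrix (Fin m) (Fin m) ℝ := R + Bᵀ * P * B with hWdef
  have hWt : Wᵀ = W := by
    simp [hWdef, Matrix.transpose_add, Matrix.transpose_mul, Matrix.transpose_transpose,
      hP, hRs, Matrix.mul_assoc]
  have hGt : (W⁻¹)ᵀ = W⁻¹ := by rw [Matrix.transpose_nonsing_inv, hWt]
  have hWG : ∀ v : Fin m → ℝ, W *ᵥ (W⁻¹ *ᵥ v) = v := fun v => by
    rw [Matrix.mulVec_mulVec, Matrix.mul_nonsing_inv _ hWu, Matrix.one_mulVec]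
  have hGW : ∀ v : Fin m → ℝ, W⁻¹ *ᵥ (W *ᵥ v) = v := fun v => by
    rw [Matrix.mulVec_mulVec, Matrix.nonsing_inv_mul _ hWu, Matrix.one_mulVec]
  set z : Fin m → ℝ := Bᵀ *ᵥ (P *ᵥ (A *ᵥ x)) with hz
  have hKx : (W⁻¹ * (Bᵀ * P * A)) *ᵥ x = W⁻¹ *ᵥ z := by
    simp only [hz, ← Matrix.mulVec_mulVec]
  rw [hKx]
  have hsq : (u + W⁻¹ *ᵥ z) ⬝ᵥ (W *ᵥ (u + W⁻¹ *ᵥ z)) =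
      u ⬝ᵥ (W *ᵥ u) + z ⬝ᵥ u + (u ⬝ᵥ z + z ⬝ᵥ (W⁻¹ *ᵥ z)) := by
    rw [Matrix.mulVec_add, hWG z, dotProduct_add, add_dotProduct, add_dotProduct,
      dotTrans W⁻¹ z (W *ᵥ u), hGt, hGW u, dotTrans W⁻¹ z z, hGt]
  rw [hsq]
  simp only [SwitchedLQR.ell, SwitchedLQR.Ric, hz, Matrix.sub_mulVec, Matrix.add_mulVec,
    Matrix.mulVec_add, dotProduct_add, add_dotProduct, dotProduct_sub, sub_dotProduct,
    ← Matrix.mulVec_mulVec, dotTrans, Matrix.transpose_transpose, hP, hGt, hWdef]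
  ring

lemma ric_le (S : SwitchedLQR n m M) (i : Fin M) (hR : ∀ i, (S.R i).PosDef)
    (P : Matrix (Fin n) (Fin n) ℝ) (hP : P.PosSemidef) (x : Fin n → ℝ) (u : Fin m → ℝ) :
    x ⬝ᵥ (S.Ric i P *ᵥ x) ≤ S.ell x u i +
      (S.A i *ᵥ x + S.B i *ᵥ u) ⬝ᵥ (P *ᵥ (S.A i *ᵥ x + S.B i *ᵥ u)) := by
  have hPt : Pᵀ = P := by
    exact (Matrix.conjTranspose_eq_transpose_of_trivial P).symm.trans hP.1
  have hRs : (S.R i)ᵀ = S.R i := by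
    exact (Matrix.conjTranspose_eq_transpose_of_trivial _).symm.trans (hR i).isHermitian
  have hBPB : ((S.B i)ᵀ * P * S.B i).PosSemidef := by
    have := hP.conjTranspose_mul_mul_same (S.B i)
    rwa [Matrix.conjTranspose_eq_transpose_of_trivial] at this
  have hW : (S.R i + (S.B i)ᵀ * P * S.B i).PosDef := (hR i).add_posSemidef hBPB
  have hWu : IsUnit (S.R i + (S.B i)ᵀ * P * S.B i).det := hW.det_pos.ne'.isUnit
  have hid := ric_identity S i P hPt hRs hWu x u
  have hnn : 0 ≤ (u + ((S.R i + (S.B i)ᵀ * P * S.B i)⁻¹ * ((S.B i)ᵀ * P * S.A i)) *ᵥ x) ⬝ᵥ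
      ((S.R i + (S.B i)ᵀ * P * S.B i) *ᵥ
        (u + ((S.R i + (S.B i)ᵀ * P * S.B i)⁻¹ * ((S.B i)ᵀ * P * S.A i)) *ᵥ x)) := by
    simpa only [star_trivial] using hW.posSemidef.dotProduct_mulVec_nonneg _
  linarith

lemma ric_psd (S : SwitchedLQR n m M) (i : Fin M) (hQ : ∀ i, (S.Q i).PosDef)
    (hR : ∀ i, (S.R i).PosDef)
    (P : Matrix (Fin n) (Fin n) ℝ) (hP : P.PosSemidef) : (S.Ric i P).PosSemidef := by
  have hPt : Pᵀ = P := by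
    exact (Matrix.conjTranspose_eq_transpose_of_trivial P).symm.trans hP.1
  have hRs : (S.R i)ᵀ = S.R i := by
    exact (Matrix.conjTranspose_eq_transpose_of_trivial _).symm.trans (hR i).isHermitian
  have hQs : (S.Q i)ᵀ = S.Q i := by
    exact (Matrix.conjTranspose_eq_transpose_of_trivial _).symm.trans (hQ i).isHermitian
  have hBPB : ((S.B i)ᵀ * P * S.B i).PosSemidef := by
    have := hP.conjTranspose_mul_mul_same (S.B i)
    rwa [Matrix.conjTranspose_eq_transpose_of_trivial] at this
  have hW : (S.R i + (S.B i)ᵀ * P * S.B i).PosDef := (hR i).add_posSemidef hBPB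
  have hWu : IsUnit (S.R i + (S.B i)ᵀ * P * S.B i).det := hW.det_pos.ne'.isUnit
  have hWt : (S.R i + (S.B i)ᵀ * P * S.B i)ᵀ = S.R i + (S.B i)ᵀ * P * S.B i := by
    simp [Matrix.transpose_add, Matrix.transpose_mul, Matrix.transpose_transpose,
      hPt, hRs, Matrix.mul_assoc]
  refine Matrix.PosSemidef.of_dotProduct_mulVec_nonneg ?_ ?_
  · have hT : (S.Ric i P)ᵀ = S.Ric i P := by
      simp only [SwitchedLQR.Ric, Matrix.transpose_add, Matrix.transpose_sub,
        Matrix.transpose_mul, Matrix.transpose_transpose, Matrix.transpose_nonsing_inv,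
        hPt, hQs, hWt]
      simp [Matrix.mul_assoc]
    exact (Matrix.conjTranspose_eq_transpose_of_trivial _).trans hT
  · intro v
    have hid := ric_identity S i P hPt hRs hWu v
      (-(((S.R i + (S.B i)ᵀ * P * S.B i)⁻¹ * ((S.B i)ᵀ * P * S.A i)) *ᵥ v))
    rw [neg_add_cancel] at hid
    have e0 : (0 : Fin m → ℝ) ⬝ᵥ ((S.R i + (S.B i)ᵀ * P * S.B i) *ᵥ (0 : Fin m → ℝ)) = 0 := by
      simp
    rw [e0, add_zero] at hid
    have h1 := ell_nonneg S hQ hR v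
      (-(((S.R i + (S.B i)ᵀ * P * S.B i)⁻¹ * ((S.B i)ᵀ * P * S.A i)) *ᵥ v)) i
    have h2 := hP.dotProduct_mulVec_nonneg (S.A i *ᵥ v + S.B i *ᵥ
      (-(((S.R i + (S.B i)ᵀ * P * S.B i)⁻¹ * ((S.B i)ᵀ * P * S.A i)) *ᵥ v)))
    simp only [star_trivial] at h2
    simp only [star_trivial]
    linarith

end Ric


section DP

variable {n m M : ℕ}

lemma phi_zero (S : SwitchedLQR n m M) (x : Fin n → ℝ) (u : ℕ → Fin m → ℝ)
    (is : ℕ → Fin M) : S.phi x u is 0 = x := rfl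

lemma phi_succ (S : SwitchedLQR n m M) (x : Fin n → ℝ) (u : ℕ → Fin m → ℝ)
    (is : ℕ → Fin M) (k : ℕ) :
    S.phi x u is (k + 1) = S.A (is k) *ᵥ S.phi x u is k + S.B (is k) *ᵥ u k := rfl

lemma phi_shift (S : SwitchedLQR n m M) (x : Fin n → ℝ) (u : ℕ → Fin m → ℝ)
    (is : ℕ → Fin M) (k : ℕ) :
    S.phi x u is (k + 1) =
      S.phi (S.A (is 0) *ᵥ x + S.B (is 0) *ᵥ u 0) (fun j => u (j + 1))
        (fun j => is (j + 1)) k := by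
  induction k with
  | zero => rfl
  | succ k ih => rw [phi_succ, ih, phi_succ]

lemma pseq_psd (S : SwitchedLQR n m M) (hQ : ∀ i, (S.Q i).PosDef)
    (hR : ∀ i, (S.R i).PosDef) (Pund : Matrix (Fin n) (Fin n) ℝ)
    (hPund : Pund.PosSemidef) : ∀ l : List (Fin M), (S.Pseq Pund l).PosSemidef
  | [] => hPund
  | i :: l => ric_psd S i hQ hR _ (pseq_psd S hQ hR Pund hPund l)

lemma Jd_succ (S : SwitchedLQR n m M) (Pund : Matrix (Fin n) (Fin n) ℝ)
    (d : ℕ) (x : Fin n → ℝ) (u : ℕ → Fin m → ℝ) (is : ℕ → Fin M) :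
    S.Jd Pund (d + 1) x u is = S.ell x (u 0) (is 0) +
      S.Jd Pund d (S.A (is 0) *ᵥ x + S.B (is 0) *ᵥ u 0) (fun j => u (j + 1))
        (fun j => is (j + 1)) := by
  simp only [SwitchedLQR.Jd]
  rw [Finset.sum_range_succ']
  simp only [phi_shift, phi_zero]
  ring

lemma exists_list_le_Jd (S : SwitchedLQR n m M) (hQ : ∀ i, (S.Q i).PosDef)
    (hR : ∀ i, (S.R i).PosDef) (Pund : Matrix (Fin n) (Fin n) ℝ)
    (hPund : Pund.PosSemidef) :
    ∀ (d : ℕ) (x : Fin n → ℝ) (u : ℕ → Fin m → ℝ) (is : ℕ → Fin M),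
      ∃ l : List (Fin M), l.length = d ∧
        x ⬝ᵥ (S.Pseq Pund l *ᵥ x) ≤ S.Jd Pund d x u is := by
  intro d
  induction d with
  | zero =>
    intro x u is
    exact ⟨[], rfl, by simp [SwitchedLQR.Jd, SwitchedLQR.Pseq, phi_zero]⟩
  | succ d ih =>
    intro x u is
    obtain ⟨l, hl, hle⟩ := ih (S.A (is 0) *ᵥ x + S.B (is 0) *ᵥ u 0)
      (fun j => u (j + 1)) (fun j => is (j + 1))
    refine ⟨is 0 :: l, by simp [hl], ?_⟩
    have h2 := ric_le S (is 0) hR (S.Pseq Pund l)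
      (pseq_psd S hQ hR Pund hPund l) x (u 0)
    have h1 : S.Pseq Pund (is 0 :: l) = S.Ric (is 0) (S.Pseq Pund l) := rfl
    rw [Jd_succ, h1]
    linarith

lemma cond1_step (S : SwitchedLQR n m M) (Pund : Matrix (Fin n) (Fin n) ℝ)
    (hPt : Pundᵀ = Pund) (hC : S.Cond1 Pund) (i : Fin M) (x : Fin n → ℝ)
    (u : Fin m → ℝ) :
    x ⬝ᵥ (Pund *ᵥ x) ≤ S.ell x u i +
      (S.A i *ᵥ x + S.B i *ᵥ u) ⬝ᵥ (Pund *ᵥ (S.A i *ᵥ x + S.B i *ᵥ u)) := by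
  have h := (hC i).dotProduct_mulVec_nonneg (Sum.elim x u)
  rw [star_trivial, Matrix.fromBlocks_mulVec, sumElim_dotProduct_sumElim] at h
  simp only [SwitchedLQR.ell, Matrix.sub_mulVec, Matrix.add_mulVec, Matrix.mulVec_add,
    dotProduct_add, dotProduct_sub, add_dotProduct, sub_dotProduct,
    ← Matrix.mulVec_mulVec, dotTrans, Matrix.transpose_transpose, hPt, Sum.elim_comp_inl, Sum.elim_comp_inr] at h ⊢
  linarith

end DP

/-- Lemma 1: under Condition 1 and Assumption SA1, for every `d`
and `x`: `V*_d(x) ≤ V*(x) ≤ xᵀP̄x` (in `[0,∞]`), and every pair of optimal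
infinite input sequences drives the solution to `0`. -/
theorem stmt10 {n m M : ℕ} (hn : 0 < n) (hm : 0 < m) (hM : 0 < M)
    (S : SwitchedLQR n m M)
    (hQ : ∀ i : Fin M, (S.Q i).PosDef) (hR : ∀ i : Fin M, (S.R i).PosDef)
    (Pund : Matrix (Fin n) (Fin n) ℝ) (hPund : Pund.PosSemidef)
    (hC : S.Cond1 Pund)
    (Pbar : Matrix (Fin n) (Fin n) ℝ) (hSA : S.SA1 Pbar) :
    ∀ (d : ℕ) (x : Fin n → ℝ),
      ENNReal.ofReal (S.Vd Pund d x) ≤ S.Vstar x ∧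
      S.Vstar x ≤ ENNReal.ofReal (x ⬝ᵥ (Pbar *ᵥ x)) ∧
      (∀ (u : ℕ → Fin m → ℝ) (is : ℕ → Fin M),
        S.Jinf x u is = S.Vstar x →
        Tendsto (fun k => S.phi x u is k) atTop (nhds 0)) := by
  classical
  have hPt : Pundᵀ = Pund :=
    (Matrix.conjTranspose_eq_transpose_of_trivial _).symm.trans hPund.1
  choose c hc using fun i => posdef_lower hn (S.Q i) (hQ i)
  obtain ⟨i₀⟩ : Nonempty (Fin M) := ⟨⟨0, hM⟩⟩
  obtain ⟨imin, -, hmin⟩ :=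
    Finset.exists_min_image Finset.univ c ⟨i₀, Finset.mem_univ _⟩
  have hc₀ : 0 < c imin := (hc imin).1
  have hlow : ∀ (i : Fin M) (y : Fin n → ℝ), c imin * (y ⬝ᵥ y) ≤ y ⬝ᵥ (S.Q i *ᵥ y) := by
    intro i y
    refine le_trans ?_ ((hc i).2 y)
    exact mul_le_mul_of_nonneg_right (hmin i (Finset.mem_univ i)) (dotSelf_nonneg y)
  have key : ∀ (x : Fin n → ℝ) (u : ℕ → Fin m → ℝ) (is : ℕ → Fin M),
      S.Jinf x u is ≠ ⊤ →
        Tendsto (fun k => S.phi x u is k) atTop (nhds 0) ∧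
        Summable (fun k => S.ell (S.phi x u is k) (u k) (is k)) := by
    intro x u is hne
    have hnn : ∀ k, 0 ≤ S.ell (S.phi x u is k) (u k) (is k) :=
      fun k => ell_nonneg S hQ hR _ _ _
    rw [SwitchedLQR.Jinf] at hne
    have hsum : Summable (fun k => S.ell (S.phi x u is k) (u k) (is k)) :=
      (ENNReal.summable_toReal hne).congr fun k => ENNReal.toReal_ofReal (hnn k)
    have hl0 : Tendsto (fun k => S.ell (S.phi x u is k) (u k) (is k)) atTop (nhds 0) :=
      hsum.tendsto_atTop_zero
    have hd : Tendsto (fun k => (S.phi x u is k) ⬝ᵥ (S.phi x u is k)) atTop (nhds 0) := by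
      refine squeeze_zero (fun k => dotSelf_nonneg _)
        (g := fun k => (c imin)⁻¹ * S.ell (S.phi x u is k) (u k) (is k)) (fun k => ?_) ?_
      · have h1 : c imin * ((S.phi x u is k) ⬝ᵥ (S.phi x u is k)) ≤
            S.ell (S.phi x u is k) (u k) (is k) := by
          have h2 := hlow (is k) (S.phi x u is k)
          have h3 : (0:ℝ) ≤ (u k) ⬝ᵥ (S.R (is k) *ᵥ u k) := by
            simpa using (hR (is k)).posSemidef.dotProduct_mulVec_nonneg (u k)
          simp only [SwitchedLQR.ell]
          linarith
        calc (S.phi x u is k) ⬝ᵥ (S.phi x u is k)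
            = (c imin)⁻¹ * (c imin * ((S.phi x u is k) ⬝ᵥ (S.phi x u is k))) := by
              field_simp
          _ ≤ (c imin)⁻¹ * S.ell (S.phi x u is k) (u k) (is k) :=
              mul_le_mul_of_nonneg_left h1 (inv_nonneg.mpr hc₀.le)
      · simpa using hl0.const_mul (c imin)⁻¹
    refine ⟨?_, hsum⟩
    have hb : ∀ k, ‖S.phi x u is k‖ ≤ Real.sqrt ((S.phi x u is k) ⬝ᵥ (S.phi x u is k)) := by
      intro k
      rw [pi_norm_le_iff_of_nonneg (Real.sqrt_nonneg _)]
      intro j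
      rw [Real.norm_eq_abs, ← Real.sqrt_sq_eq_abs]
      refine Real.sqrt_le_sqrt ?_
      rw [sq]
      simp only [dotProduct]
      exact Finset.single_le_sum (f := fun i => S.phi x u is k i * S.phi x u is k i)
        (fun i _ => mul_self_nonneg _) (Finset.mem_univ j)
    refine squeeze_zero_norm hb ?_
    have := (Real.continuous_sqrt.continuousAt (x := (0:ℝ))).tendsto.comp hd
    simpa [Function.comp_def] using this
  intro d x
  obtain ⟨u₀, is₀, hJ₀, hV₀⟩ := hSA.2 x
  refine ⟨?_, hV₀, ?_⟩
  · rw [SwitchedLQR.Vstar]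
    refine le_iInf fun u => le_iInf fun is => ?_
    by_cases htop : S.Jinf x u is = ⊤
    · rw [htop]; exact le_top
    · obtain ⟨hphi, hsum⟩ := key x u is htop
      have hnn : ∀ k, 0 ≤ S.ell (S.phi x u is k) (u k) (is k) :=
        fun k => ell_nonneg S hQ hR _ _ _
      have tail : ∀ dd : ℕ, (S.phi x u is dd) ⬝ᵥ (Pund *ᵥ S.phi x u is dd) ≤
          ∑' k, S.ell (S.phi x u is (dd + k)) (u (dd + k)) (is (dd + k)) := by
        intro dd
        have hmono : ∀ N : ℕ, (S.phi x u is dd) ⬝ᵥ (Pund *ᵥ S.phi x u is dd) ≤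
            (∑ k ∈ Finset.range N, S.ell (S.phi x u is (dd + k)) (u (dd + k)) (is (dd + k))) +
            (S.phi x u is (dd + N)) ⬝ᵥ (Pund *ᵥ S.phi x u is (dd + N)) := by
          intro N
          induction N with
          | zero => simp
          | succ N ih =>
            have step := cond1_step S Pund hPt hC (is (dd + N)) (S.phi x u is (dd + N))
              (u (dd + N))
            rw [← phi_succ] at step
            rw [Finset.sum_range_succ, Nat.add_succ]
            linarith
        have hsum' : Summable
            (fun k => S.ell (S.phi x u is (dd + k)) (u (dd + k)) (is (dd + k))) :=
          ((summable_nat_add_iff dd).mpr hsum).congr fun k => by rw [add_comm]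
        have h1 := hsum'.hasSum.tendsto_sum_nat
        have h2 : Tendsto (fun N => (S.phi x u is (dd + N)) ⬝ᵥ (Pund *ᵥ S.phi x u is (dd + N)))
            atTop (nhds 0) := by
          have hshift : Tendsto (fun N : ℕ => dd + N) atTop atTop := by
            simpa [add_comm] using tendsto_add_atTop_nat dd
          have := ((quadContinuous Pund).continuousAt (x := (0 : Fin n → ℝ))).tendsto.comp
            (hphi.comp hshift)
          simpa [Function.comp_def] using this
        exact ge_of_tendsto (by simpa using h1.add h2) (Eventually.of_forall hmono)
      obtain ⟨l, hl, hle⟩ := exists_list_le_Jd S hQ hR Pund hPund d x u is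
      have hVd : S.Vd Pund d x ≤ S.Jd Pund d x u is := by
        refine csInf_le_of_le ⟨0, fun r hr => ?_⟩ ⟨l, hl, rfl⟩ hle
        obtain ⟨l', -, rfl⟩ := hr
        simpa using (pseq_psd S hQ hR Pund hPund l').dotProduct_mulVec_nonneg x
      have hJd : S.Jd Pund d x u is ≤
          ∑' k, S.ell (S.phi x u is k) (u k) (is k) := by
        rw [SwitchedLQR.Jd]
        have ht := tail d
        have hsplit := Summable.sum_add_tsum_nat_add d hsum
        have heq : (∑' k, S.ell (S.phi x u is (k + d)) (u (k + d)) (is (k + d))) =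
            ∑' k, S.ell (S.phi x u is (d + k)) (u (d + k)) (is (d + k)) := by
          refine tsum_congr fun k => by rw [add_comm]
        rw [heq] at hsplit
        linarith
      have hJeq : S.Jinf x u is =
          ENNReal.ofReal (∑' k, S.ell (S.phi x u is k) (u k) (is k)) := by
        rw [SwitchedLQR.Jinf, ENNReal.ofReal_tsum_of_nonneg hnn hsum]
      rw [hJeq]
      exact ENNReal.ofReal_le_ofReal (hVd.trans hJd)
  · intro u is hJ
    have hne : S.Jinf x u is ≠ ⊤ := by
      rw [hJ]
      exact ne_top_of_le_ne_top ENNReal.ofReal_ne_top hV₀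
    exact (key x u is hne).1
end
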